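/- For every natural number n ≥ 3, the worst-case minimum spanner sizes for temporal cliques and temporal bi-cliques satisfy σ_cl(n) ≤ σ_bc(n) and σ_bc(n) ≤ 16·σ_cl(n); consequently σ_cl(n) ∈ Θ(σ_bc(n)). -/

import Mathlib

/-!
Formalization framework for temporal graphs, temporal paths, spanners,
bi-spanners, and related notions from the paper on temporal spanners of
temporal cliques and bi-cliques.

A temporal graph on vertex type `V` is given by a labeling `lab : Sym2 V → L`
(only values on actual edges matter) together with an edge set
`E : Set (Sym2 V)`.  A temporal path is a nonempty list of vertices whose
consecutive pairs are edges of the allowed edge set and whose labels are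
non-decreasing along the path (non-strict temporal path).
-/

namespace TS

variable {V : Type} {L : Type} [LinearOrder L]

/-- The list of (undirected) edges traversed by a list of vertices. -/
def pathEdges (p : List V) : List (Sym2 V) :=
  (p.zip p.tail).map fun q => s(q.1, q.2)

/-- `p` is a temporal path using only edges from `S`, labelled by `lab`:
nonempty, all edges in `S`, labels non-decreasing along the path. -/
def IsTemporalPath (lab : Sym2 V → L) (S : Set (Sym2 V)) (p : List V) : Prop :=
  p ≠ [] ∧ (∀ e ∈ pathEdges p, e ∈ S) ∧
    (pathEdges p).Chain' fun e f => lab e ≤ lab f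

/-- `u` reaches `v` via a temporal path contained in `S`. -/
def Reaches (lab : Sym2 V → L) (S : Set (Sym2 V)) (u v : V) : Prop :=
  ∃ p : List V, p.head? = some u ∧ p.getLast? = some v ∧ IsTemporalPath lab S p

/-- Edge set of the complete graph on `V`. -/
def cliqueEdges (V : Type) : Set (Sym2 V) := {e | ¬ e.IsDiag}

/-- Edge set `A ⊗ B` of the complete bipartite graph with parts `α` and `β`. -/
def bicliqueEdges (α β : Type) : Set (Sym2 (α ⊕ β)) :=
  {e | ∃ a b, e = s(Sum.inl a, Sum.inr b)}

/-- `S` is a spanner of the temporal graph with edge set `E`: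
`S ⊆ E` and every vertex reaches every other vertex within `S`. -/
def IsSpanner (lab : Sym2 V → L) (E S : Set (Sym2 V)) : Prop :=
  S ⊆ E ∧ ∀ u v : V, Reaches lab S u v

/-- `S` is a bi-spanner of the temporal bi-clique with parts `α`, `β`:
`S ⊆ α ⊗ β` and every `a ∈ α` reaches every `b ∈ β` within `S`. -/
def IsBiSpanner {α β : Type} (lab : Sym2 (α ⊕ β) → L) (S : Set (Sym2 (α ⊕ β))) : Prop :=
  S ⊆ bicliqueEdges α β ∧ ∀ (a : α) (b : β), Reaches lab S (Sum.inl a) (Sum.inr b)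

/-- `σ_cl n`: the minimum number `m` such that every temporal clique on `n`
vertices admits a spanner with at most `m` edges. -/
noncomputable def sigmaCl (n : ℕ) : ℕ :=
  sInf {m | ∀ lab : Sym2 (Fin n) → ℕ, ∃ S : Finset (Sym2 (Fin n)),
    IsSpanner lab (cliqueEdges (Fin n)) (↑S) ∧ S.card ≤ m}

/-- `σ_bc n`: the minimum number `m` such that every temporal bi-clique with
`n` vertices on each side admits a bi-spanner with at most `m` edges. -/
noncomputable def sigmaBc (n : ℕ) : ℕ :=
  sInf {m | ∀ lab : Sym2 (Fin n ⊕ Fin n) → ℕ, ∃ S : Finset (Sym2 (Fin n ⊕ Fin n)),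
    IsBiSpanner lab (↑S) ∧ S.card ≤ m}

/-- `In(v,t)`: vertices reaching `v` via a temporal path (in edge set `E`)
all of whose labels are at most `t`. -/
def InSet (lab : Sym2 V → L) (E : Set (Sym2 V)) (v : V) (t : L) : Set V :=
  {u | ∃ p : List V, p.head? = some u ∧ p.getLast? = some v ∧
    IsTemporalPath lab E p ∧ ∀ e ∈ pathEdges p, lab e ≤ t}

/-- `Out(v,t)`: vertices that `v` reaches via a temporal path (in edge set `E`)
all of whose labels are at least `t`. -/
def OutSet (lab : Sym2 V → L) (E : Set (Sym2 V)) (v : V) (t : L) : Set V :=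
  {w | ∃ p : List V, p.head? = some v ∧ p.getLast? = some w ∧
    IsTemporalPath lab E p ∧ ∀ e ∈ pathEdges p, t ≤ lab e}

/-- `In(e)` for the edge `e = {u,v}`. -/
def InEdge (lab : Sym2 V → L) (E : Set (Sym2 V)) (u v : V) : Set V :=
  InSet lab E u (lab s(u, v)) ∪ InSet lab E v (lab s(u, v))

/-- `Out(e)` for the edge `e = {u,v}`. -/
def OutEdge (lab : Sym2 V → L) (E : Set (Sym2 V)) (u v : V) : Set V :=
  OutSet lab E u (lab s(u, v)) ∪ OutSet lab E v (lab s(u, v))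

variable {α β : Type}

/-- In a bi-clique, `b` is the earliest neighbor `π⁻(a)` of `a ∈ A`. -/
def IsEarliestNbrA (lab : Sym2 (α ⊕ β) → L) (a : α) (b : β) : Prop :=
  ∀ b' : β, lab s(Sum.inl a, Sum.inr b) ≤ lab s(Sum.inl a, Sum.inr b')

/-- In a bi-clique, `a` is the earliest neighbor `π⁻(b)` of `b ∈ B`. -/
def IsEarliestNbrB (lab : Sym2 (α ⊕ β) → L) (b : β) (a : α) : Prop :=
  ∀ a' : α, lab s(Sum.inl a, Sum.inr b) ≤ lab s(Sum.inl a', Sum.inr b)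

/-- In a bi-clique, `b` is the latest neighbor `π⁺(a)` of `a ∈ A`. -/
def IsLatestNbrA (lab : Sym2 (α ⊕ β) → L) (a : α) (b : β) : Prop :=
  ∀ b' : β, lab s(Sum.inl a, Sum.inr b') ≤ lab s(Sum.inl a, Sum.inr b)

/-- In a bi-clique, `a` is the latest neighbor `π⁺(b)` of `b ∈ B`. -/
def IsLatestNbrB (lab : Sym2 (α ⊕ β) → L) (b : β) (a : α) : Prop :=
  ∀ a' : α, lab s(Sum.inl a', Sum.inr b) ≤ lab s(Sum.inl a, Sum.inr b)

/-- The bi-clique is extremally matched: both the set `M⁻` of earliest edges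
and the set `M⁺` of latest edges form perfect matchings, i.e. the earliest-
(resp. latest-) neighbor maps of the two sides are mutually inverse. -/
def ExtremallyMatched (lab : Sym2 (α ⊕ β) → L) : Prop :=
  (∃ (f : α → β) (g : β → α),
    (∀ a, IsEarliestNbrA lab a (f a)) ∧ (∀ b, IsEarliestNbrB lab b (g b)) ∧
    (∀ a, g (f a) = a) ∧ (∀ b, f (g b) = b)) ∧
  (∃ (f : α → β) (g : β → α),
    (∀ a, IsLatestNbrA lab a (f a)) ∧ (∀ b, IsLatestNbrB lab b (g b)) ∧
    (∀ a, g (f a) = a) ∧ (∀ b, f (g b) = b))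

/-- `a ∈ A` is dismountable: there is `a' ≠ a` with
`λ({a, π⁻(a')}) ≤ λ({a', π⁻(a')})`. -/
def DismountableA (lab : Sym2 (α ⊕ β) → L) (a : α) : Prop :=
  ∃ (a' : α) (b : β), a' ≠ a ∧ IsEarliestNbrA lab a' b ∧
    lab s(Sum.inl a, Sum.inr b) ≤ lab s(Sum.inl a', Sum.inr b)

/-- `b ∈ B` is dismountable: there is `b' ≠ b` with
`λ({b', π⁺(b')}) ≤ λ({b, π⁺(b')})`. -/
def DismountableB (lab : Sym2 (α ⊕ β) → L) (b : β) : Prop :=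
  ∃ (b' : β) (a : α), b' ≠ b ∧ IsLatestNbrB lab b' a ∧
    lab s(Sum.inl a, Sum.inr b') ≤ lab s(Sum.inl a, Sum.inr b)

/-- The edge `{a', b'}` is `e`-reverted for `e = {a,b}`:
`λ({a', b}) ≤ λ({π⁺(b'), b})` or `λ({π⁻(a'), a}) ≤ λ({b', a})`. -/
def Reverted (lab : Sym2 (α ⊕ β) → L) (a : α) (b : β) (a' : α) (b' : β) : Prop :=
  (∃ a'' : α, IsLatestNbrB lab b' a'' ∧
    lab s(Sum.inl a', Sum.inr b) ≤ lab s(Sum.inl a'', Sum.inr b)) ∨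
  (∃ b'' : β, IsEarliestNbrA lab a' b'' ∧
    lab s(Sum.inl a, Sum.inr b'') ≤ lab s(Sum.inl a, Sum.inr b'))

/-- `M(e)`: the set of edges of the bi-clique that are *not* `e`-reverted,
for `e = {a,b}`. -/
def MSet (lab : Sym2 (α ⊕ β) → L) (a : α) (b : β) : Set (Sym2 (α ⊕ β)) :=
  {e | ∃ (a' : α) (b' : β), e = s(Sum.inl a', Sum.inr b') ∧ ¬ Reverted lab a b a' b'}

/-- `ind_{a}({a,b})`: the (1-based) rank of the edge `{a,b}` among the edges
incident to `a ∈ A`, ordered increasingly by label. -/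
def indA [Fintype β] (lab : Sym2 (α ⊕ β) → ℕ) (a : α) (b : β) : ℕ :=
  (Finset.univ.filter fun b' : β =>
    lab s(Sum.inl a, Sum.inr b') ≤ lab s(Sum.inl a, Sum.inr b)).card

/-- `ind_{b}({a,b})`: the (1-based) rank of the edge `{a,b}` among the edges
incident to `b ∈ B`, ordered increasingly by label. -/
def indB [Fintype α] (lab : Sym2 (α ⊕ β) → ℕ) (a : α) (b : β) : ℕ :=
  (Finset.univ.filter fun a' : α =>
    lab s(Sum.inl a', Sum.inr b) ≤ lab s(Sum.inl a, Sum.inr b)).card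

/-- Underlying symmetric label function of the shifted matching graph `SM_n`:
the edge `{a_i, b_j}` gets label `(j - i) mod n`. -/
def smFun (n : ℕ) : (Fin n ⊕ Fin n) → (Fin n ⊕ Fin n) → ℕ
  | Sum.inl i, Sum.inr j => (n + (j : ℕ) - (i : ℕ)) % n
  | Sum.inr j, Sum.inl i => (n + (j : ℕ) - (i : ℕ)) % n
  | _, _ => 0

theorem smFun_symm (n : ℕ) : ∀ x y, smFun n x y = smFun n y x := by
  rintro (i | i) (j | j) <;> rfl

/-- The labeling of the shifted matching graph `SM_n`. -/
def smLab (n : ℕ) : Sym2 (Fin n ⊕ Fin n) → ℕ :=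
  Sym2.lift ⟨smFun n, smFun_symm n⟩

end TS

namespace TS

section AuxListLemmas

variable {V W : Type}

@[simp] lemma pathEdges_nil : pathEdges ([] : List V) = [] := rfl
@[simp] lemma pathEdges_singleton (x : V) : pathEdges [x] = [] := rfl
@[simp] lemma pathEdges_cons_cons (x y : V) (l : List V) :
    pathEdges (x :: y :: l) = s(x, y) :: pathEdges (y :: l) := rfl

lemma pathEdges_map (f : V → W) : ∀ (p : List V),
    pathEdges (p.map f) = (pathEdges p).map (Sym2.map f)
  | [] => rfl
  | [_] => rfl
  | x :: y :: l => by
      simp only [List.map_cons, pathEdges_cons_cons]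
      rw [show pathEdges (f y :: List.map f l) = pathEdges ((y :: l).map f) from rfl,
        pathEdges_map f (y :: l)]
      simp [Sym2.map_pair_eq]

lemma chain'_le_iff_pairwise (lab : Sym2 V → ℕ) (l : List (Sym2 V)) :
    l.Chain' (fun e f => lab e ≤ lab f) ↔ l.Pairwise (fun e f => lab e ≤ lab f) := by
  haveI : IsTrans (Sym2 V) (fun e f => lab e ≤ lab f) := ⟨fun _ _ _ => Nat.le_trans⟩
  exact List.isChain_iff_pairwise

lemma edges_not_isDiag : ∀ (p : List V), p.Chain' (· ≠ ·) →
    ∀ e ∈ pathEdges p, ¬ e.IsDiag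
  | [], _ => by simp
  | [_], _ => by simp
  | a :: b :: l, hch => by
      intro e he
      rw [pathEdges_cons_cons] at he
      rcases List.mem_cons.1 he with rfl | he'
      · have hab : a ≠ b := (List.isChain_cons_cons.1 hch).1
        simp [Sym2.mk_isDiag_iff, hab]
      · exact edges_not_isDiag (b :: l) (List.isChain_cons_cons.1 hch).2 e he'

variable [DecidableEq V]

/-- Remove consecutive duplicates from a list. -/
def compress : List V → List V
  | [] => []
  | [a] => [a]
  | a :: b :: l => if a = b then compress (b :: l) else a :: compress (b :: l)

lemma compress_head? : ∀ (p : List V), (compress p).head? = p.head?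
  | [] => rfl
  | [_] => rfl
  | a :: b :: l => by
      rw [compress]
      split
      · rename_i hab; rw [compress_head? (b :: l)]; simp [hab]
      · rfl

lemma compress_cons (b : V) (l : List V) :
    ∃ cs : List V, compress (b :: l) = b :: cs := by
  have h1 := compress_head? (b :: l)
  cases hc : compress (b :: l) with
  | nil => rw [hc] at h1; simp at h1
  | cons c cs =>
      rw [hc] at h1; simp at h1; exact ⟨cs, by rw [h1]⟩

lemma compress_getLast? : ∀ (p : List V), (compress p).getLast? = p.getLast?
  | [] => rfl
  | [_] => rfl
  | a :: b :: l => by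
      rw [compress]
      split
      · rw [compress_getLast? (b :: l)]; exact (List.getLast?_cons_cons ..).symm
      · obtain ⟨cs, hcs⟩ := compress_cons b l
        rw [hcs, List.getLast?_cons_cons, ← hcs, compress_getLast? (b :: l),
          List.getLast?_cons_cons]

lemma compress_chain_ne : ∀ (p : List V), (compress p).Chain' (· ≠ ·)
  | [] => List.isChain_nil
  | [a] => List.isChain_singleton a
  | a :: b :: l => by
      rw [compress]
      split
      · exact compress_chain_ne (b :: l)
      · rename_i hab
        show List.IsChain _ _; rw [List.isChain_cons]
        refine ⟨fun y hy => ?_, compress_chain_ne (b :: l)⟩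
        rw [compress_head? (b :: l)] at hy
        simp only [List.head?_cons, Option.mem_def, Option.some.injEq] at hy
        subst hy; exact hab

lemma compress_edges_sublist : ∀ (p : List V), (pathEdges (compress p)).Sublist (pathEdges p)
  | [] => by rw [compress]
  | [_] => by rw [compress]
  | a :: b :: l => by
      rw [compress]
      split
      · exact (compress_edges_sublist (b :: l)).trans (List.sublist_cons_self _ _)
      · obtain ⟨cs, hcs⟩ := compress_cons b l
        rw [hcs, pathEdges_cons_cons]
        have ih := compress_edges_sublist (b :: l)
        rw [hcs] at ih
        exact pathEdges_cons_cons a b cs ▸ (ih.cons₂ s(a, b))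

end AuxListLemmas

section AuxReaches

lemma reaches_mono {V L : Type} [LinearOrder L] {lab : Sym2 V → L} {S S' : Set (Sym2 V)}
    (hss : S ⊆ S') {u v : V} (h : Reaches lab S u v) : Reaches lab S' u v := by
  obtain ⟨p, h1, h2, h3, h4, h5⟩ := h
  exact ⟨p, h1, h2, h3, fun e he => hss (h4 e he), h5⟩

lemma reach_map {V W : Type} [DecidableEq W] (ψ : V → W) (lab2 : Sym2 W → ℕ)
    (S : Finset (Sym2 V)) {u v : V}
    (h : Reaches (fun e => lab2 (Sym2.map ψ e)) (↑S) u v) :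
    Reaches lab2 (↑(S.image (Sym2.map ψ))) (ψ u) (ψ v) := by
  obtain ⟨p, hh, hl, hne, hmem, hch⟩ := h
  refine ⟨p.map ψ, ?_, ?_, ?_, ?_, ?_⟩
  · rw [List.head?_map, hh]; rfl
  · rw [List.getLast?_map, hl]; rfl
  · intro h0
    apply hne
    cases p with
    | nil => rfl
    | cons x xs => simp at h0
  · intro e he
    rw [pathEdges_map] at he
    obtain ⟨e0, he0, rfl⟩ := List.mem_map.1 he
    exact Finset.mem_coe.2 (Finset.mem_image_of_mem _ (Finset.mem_coe.1 (hmem e0 he0)))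
  · rw [pathEdges_map]
    exact (List.isChain_map _).2 hch

end AuxReaches

section AuxOracles

lemma cl_oracle (n : ℕ) :
    ∀ lab : Sym2 (Fin n) → ℕ, ∃ S : Finset (Sym2 (Fin n)),
      IsSpanner lab (cliqueEdges (Fin n)) (↑S) ∧ S.card ≤ sigmaCl n := by
  classical
  have hne : {m | ∀ lab : Sym2 (Fin n) → ℕ, ∃ S : Finset (Sym2 (Fin n)),
      IsSpanner lab (cliqueEdges (Fin n)) (↑S) ∧ S.card ≤ m}.Nonempty := by
    refine ⟨Fintype.card (Sym2 (Fin n)), fun lab =>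
      ⟨Finset.univ.filter (fun e => ¬ e.IsDiag), ⟨?_, ?_⟩, ?_⟩⟩
    · intro e he
      rw [Finset.mem_coe, Finset.mem_filter] at he
      exact he.2
    · intro u v
      by_cases huv : u = v
      · subst huv
        exact ⟨[u], rfl, rfl, by simp, by simp, List.isChain_nil⟩
      · refine ⟨[u, v], rfl, by simp, by simp, ?_, List.isChain_singleton _⟩
        intro e he
        simp only [pathEdges_cons_cons, pathEdges_singleton] at he
        rcases List.mem_cons.1 he with rfl | h0
        · rw [Finset.mem_coe, Finset.mem_filter]
          exact ⟨Finset.mem_univ _, by simp [Sym2.mk_isDiag_iff, huv]⟩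
        · simp at h0
    · exact (Finset.card_filter_le _ _).trans (le_of_eq Finset.card_univ)
  exact Nat.sInf_mem hne

lemma bc_oracle (n : ℕ) :
    ∀ lab : Sym2 (Fin n ⊕ Fin n) → ℕ, ∃ S : Finset (Sym2 (Fin n ⊕ Fin n)),
      IsBiSpanner lab (↑S) ∧ S.card ≤ sigmaBc n := by
  classical
  have hne : {m | ∀ lab : Sym2 (Fin n ⊕ Fin n) → ℕ, ∃ S : Finset (Sym2 (Fin n ⊕ Fin n)),
      IsBiSpanner lab (↑S) ∧ S.card ≤ m}.Nonempty := by
    refine ⟨Fintype.card (Sym2 (Fin n ⊕ Fin n)), fun lab =>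
      ⟨Finset.univ.filter (fun e => e ∈ bicliqueEdges (Fin n) (Fin n)), ⟨?_, ?_⟩, ?_⟩⟩
    · intro e he
      rw [Finset.mem_coe, Finset.mem_filter] at he
      exact he.2
    · intro a b
      refine ⟨[Sum.inl a, Sum.inr b], rfl, by simp, by simp, ?_, List.isChain_singleton _⟩
      intro e he
      simp only [pathEdges_cons_cons, pathEdges_singleton] at he
      rcases List.mem_cons.1 he with rfl | h0
      · rw [Finset.mem_coe, Finset.mem_filter]
        exact ⟨Finset.mem_univ _, ⟨a, b, rfl⟩⟩
      · simp at h0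
    · exact (Finset.card_filter_le _ _).trans (le_of_eq Finset.card_univ)
  exact Nat.sInf_mem hne

end AuxOracles

/-! ### Direction 1: `σ_cl(n) ≤ σ_bc(n)` via the bipartite double cover. -/

lemma sigmaCl_le_sigmaBc (n : ℕ) : sigmaCl n ≤ sigmaBc n := by
  classical
  apply Nat.sInf_le
  intro lab
  obtain ⟨S2, ⟨hsub, hreach⟩, hcard⟩ :=
    bc_oracle n (fun e => lab (e.map (Sum.elim id id)))
  refine ⟨(S2.image (Sym2.map (Sum.elim id id))).filter (fun e => ¬ e.IsDiag), ⟨?_, ?_⟩, ?_⟩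
  · intro e he
    rw [Finset.mem_coe, Finset.mem_filter] at he
    exact he.2
  · intro u v
    obtain ⟨p, hh, hl, hne, hmem, hch⟩ := hreach u v
    have hchead : (compress (p.map (Sum.elim id id))).head? = some u := by
      rw [compress_head?, List.head?_map, hh]; rfl
    refine ⟨compress (p.map (Sum.elim id id)), hchead, ?_, ?_, ?_, ?_⟩
    · rw [compress_getLast?, List.getLast?_map, hl]; rfl
    · intro h0; rw [h0] at hchead; simp at hchead
    · intro e he
      have he' : e ∈ pathEdges (p.map (Sum.elim id id)) :=
        (compress_edges_sublist _).subset he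
      rw [pathEdges_map] at he'
      obtain ⟨e0, he0, rfl⟩ := List.mem_map.1 he'
      have hnd : ¬ (Sym2.map (Sum.elim id id) e0).IsDiag :=
        edges_not_isDiag _ (compress_chain_ne _) _ he
      rw [Finset.mem_coe, Finset.mem_filter]
      exact ⟨Finset.mem_image_of_mem _ (Finset.mem_coe.1 (hmem e0 he0)), hnd⟩
    · have h1 : (pathEdges (p.map (Sum.elim id id))).Chain' (fun e f => lab e ≤ lab f) := by
        rw [pathEdges_map]
        exact (List.isChain_map _).2 hch
      exact (chain'_le_iff_pairwise lab _).2
        (((chain'_le_iff_pairwise lab _).1 h1).sublist (compress_edges_sublist _))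
  · exact (Finset.card_filter_le _ _).trans (Finset.card_image_le.trans hcard)

/-! ### Direction 2: `σ_bc(n) ≤ 16·σ_cl(n)`.

Given a biclique labeling, we label the complete graph on `A ⊔ B` by: cross
edges get their biclique label plus one, edges inside `A` get a label above
everything, edges inside `B` get label `0`.  Then every temporal path from a
vertex of `A` to a vertex of `B` uses only cross edges.  We cover all
`A × B`-pairs of this `2n`-vertex clique by five `n`-vertex sub-cliques and
invoke the clique-spanner bound on each. -/

/-- The auxiliary symmetric function for the clique labeling on `A ⊔ B`. -/
def bigFun {n : ℕ} (lab : Sym2 (Fin n ⊕ Fin n) → ℕ) :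
    (Fin n ⊕ Fin n) → (Fin n ⊕ Fin n) → ℕ
  | Sum.inl _, Sum.inl _ => Finset.univ.sup lab + 2
  | Sum.inr _, Sum.inr _ => 0
  | x, y => lab s(x, y) + 1

lemma bigFun_symm {n : ℕ} (lab : Sym2 (Fin n ⊕ Fin n) → ℕ) :
    ∀ x y, bigFun lab x y = bigFun lab y x := by
  rintro (a | a) (b | b)
  · rfl
  · show lab s(Sum.inl a, Sum.inr b) + 1 = lab s(Sum.inr b, Sum.inl a) + 1
    rw [Sym2.eq_swap]
  · show lab s(Sum.inr a, Sum.inl b) + 1 = lab s(Sum.inl b, Sum.inr a) + 1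
    rw [Sym2.eq_swap]
  · rfl

/-- The clique labeling on `A ⊔ B` induced by a biclique labeling. -/
def bigLab {n : ℕ} (lab : Sym2 (Fin n ⊕ Fin n) → ℕ) : Sym2 (Fin n ⊕ Fin n) → ℕ :=
  Sym2.lift ⟨bigFun lab, bigFun_symm lab⟩

lemma bigLab_AA {n : ℕ} (lab : Sym2 (Fin n ⊕ Fin n) → ℕ) (a a' : Fin n) :
    bigLab lab s(Sum.inl a, Sum.inl a') = Finset.univ.sup lab + 2 := rfl

lemma bigLab_BB {n : ℕ} (lab : Sym2 (Fin n ⊕ Fin n) → ℕ) (b b' : Fin n) :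
    bigLab lab s(Sum.inr b, Sum.inr b') = 0 := rfl

lemma bigLab_AB {n : ℕ} (lab : Sym2 (Fin n ⊕ Fin n) → ℕ) (a b : Fin n) :
    bigLab lab s(Sum.inl a, Sum.inr b) = lab s(Sum.inl a, Sum.inr b) + 1 := rfl

lemma bigLab_BA {n : ℕ} (lab : Sym2 (Fin n ⊕ Fin n) → ℕ) (a b : Fin n) :
    bigLab lab s(Sum.inr b, Sum.inl a) = lab s(Sum.inl a, Sum.inr b) + 1 := by
  have : bigLab lab s(Sum.inr b, Sum.inl a) = lab s(Sum.inr b, Sum.inl a) + 1 := rfl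
  rw [this]
  conv_lhs => rw [Sym2.eq_swap]

/-- Any edge with label at least `sup + 2` has both endpoints in `A`. -/
lemma bigLab_left {n : ℕ} (lab : Sym2 (Fin n ⊕ Fin n) → ℕ) (e : Sym2 (Fin n ⊕ Fin n))
    (h : Finset.univ.sup lab + 2 ≤ bigLab lab e) : ∀ z ∈ e, z.isLeft = true := by
  induction e using Sym2.ind with
  | _ x y =>
    intro z hz
    cases x with
    | inl a =>
      cases y with
      | inl a' => rcases Sym2.mem_iff.1 hz with rfl | rfl <;> rfl
      | inr b =>
        exfalso
        rw [bigLab_AB] at h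
        have := Finset.le_sup (f := lab) (Finset.mem_univ s(Sum.inl a, Sum.inr b))
        omega
    | inr b =>
      cases y with
      | inl a =>
        exfalso
        rw [bigLab_BA] at h
        have := Finset.le_sup (f := lab) (Finset.mem_univ s(Sum.inl a, Sum.inr b))
        omega
      | inr b' =>
        exfalso
        rw [bigLab_BB] at h
        omega

lemma stay_left {α β : Type} : ∀ (p : List (α ⊕ β)),
    (∀ e ∈ pathEdges p, ∀ z ∈ e, z.isLeft = true) →
    ∀ x, p.head? = some x → x.isLeft = true →
    ∀ w, p.getLast? = some w → w.isLeft = true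
  | [] => by simp
  | [v] => by
      intro _ x hx hxl w hw
      simp only [List.head?_cons, Option.some.injEq] at hx
      simp only [List.getLast?_singleton, Option.some.injEq] at hw
      subst hx; subst hw; exact hxl
  | u :: v :: rest => by
      intro hall x hx hxl w hw
      have h1 : v.isLeft = true :=
        hall s(u, v) (by simp) v (Sym2.mem_iff.2 (Or.inr rfl))
      rw [List.getLast?_cons_cons] at hw
      exact stay_left (v :: rest)
        (fun e he => hall e (by rw [pathEdges_cons_cons]; exact List.mem_cons_of_mem _ he))
        v rfl h1 w hw

/-- Every temporal path (w.r.t. `bigLab`) ending in `B` and starting in `A`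
(or starting in `B` with all labels positive) uses only biclique edges. -/
lemma pure_cross {n : ℕ} (lab : Sym2 (Fin n ⊕ Fin n) → ℕ) : ∀ (p : List (Fin n ⊕ Fin n)),
    (pathEdges p).Pairwise (fun e f => bigLab lab e ≤ bigLab lab f) →
    (∃ b0, p.getLast? = some (Sum.inr b0)) →
    ((∃ a0, p.head? = some (Sum.inl a0)) ∨
      ((∃ b1, p.head? = some (Sum.inr b1)) ∧ ∀ e ∈ pathEdges p, 1 ≤ bigLab lab e)) →
    ∀ e ∈ pathEdges p, e ∈ bicliqueEdges (Fin n) (Fin n)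
  | [] => by simp
  | [v] => by simp
  | u :: w :: rest => by
      intro hpw hlast hhead e he
      rw [pathEdges_cons_cons] at hpw he
      obtain ⟨b0, hb0⟩ := hlast
      rw [List.getLast?_cons_cons] at hb0
      rcases hhead with ⟨a0, ha0⟩ | ⟨⟨b1, hb1⟩, hpos⟩
      · have hu : u = Sum.inl a0 := by
          simpa using ha0
        subst hu
        cases w with
        | inl a' =>
            exfalso
            have hbig : ∀ e' ∈ pathEdges (Sum.inl a0 :: Sum.inl a' :: rest),
                Finset.univ.sup lab + 2 ≤ bigLab lab e' := by
              intro e' he'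
              rw [pathEdges_cons_cons] at he'
              rcases List.mem_cons.1 he' with rfl | he''
              · rw [bigLab_AA]
              · have := List.rel_of_pairwise_cons hpw he''
                rw [bigLab_AA] at this
                exact this
            have hlastLeft := stay_left (Sum.inl a0 :: Sum.inl a' :: rest)
              (fun e' he' => bigLab_left lab e' (hbig e' he')) (Sum.inl a0) rfl rfl
              (Sum.inr b0) (by rw [List.getLast?_cons_cons]; exact hb0)
            simp at hlastLeft
        | inr b' =>
            rcases List.mem_cons.1 he with rfl | he''
            · exact ⟨a0, b', rfl⟩
            · refine pure_cross lab (Sum.inr b' :: rest) hpw.of_cons ⟨b0, hb0⟩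
                (Or.inr ⟨⟨b', rfl⟩, ?_⟩) e he''
              intro f hf
              rcases List.mem_cons.1 ((pathEdges_cons_cons (Sum.inl a0) (Sum.inr b') rest) ▸
                (List.mem_cons_self (a := s(Sum.inl a0, Sum.inr b')) (l := pathEdges (Sum.inr b' :: rest)))) with _ | _
              · have h1 := List.rel_of_pairwise_cons hpw hf
                rw [bigLab_AB] at h1
                omega
              · have h1 := List.rel_of_pairwise_cons hpw hf
                rw [bigLab_AB] at h1
                omega
      · have hu : u = Sum.inr b1 := by
          simpa using hb1
        subst hu
        cases w with
        | inr b'' =>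
            exfalso
            have := hpos s(Sum.inr b1, Sum.inr b'')
              (by rw [pathEdges_cons_cons]; exact List.mem_cons_self)
            rw [bigLab_BB] at this
            omega
        | inl a' =>
            rcases List.mem_cons.1 he with rfl | he''
            · exact ⟨a', b1, Sym2.eq_swap⟩
            · refine pure_cross lab (Sum.inl a' :: rest) hpw.of_cons ⟨b0, hb0⟩
                (Or.inl ⟨a', rfl⟩) e he''

/-! The five covering embeddings of `Fin n` into `Fin n ⊕ Fin n`. -/

def cov1 (n : ℕ) : Fin n → Fin n ⊕ Fin n := fun k =>
  if _h : (k : ℕ) < n / 2 then Sum.inl k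
  else Sum.inr ⟨(k : ℕ) - n / 2, by have := k.isLt; omega⟩

def cov2 (n : ℕ) : Fin n → Fin n ⊕ Fin n := fun k =>
  if (k : ℕ) < n / 2 then Sum.inl k else Sum.inr k

def cov3 (n : ℕ) : Fin n → Fin n ⊕ Fin n := fun k =>
  if (k : ℕ) < n / 2 then Sum.inr k else Sum.inl k

def cov4 (n : ℕ) : Fin n → Fin n ⊕ Fin n := fun k =>
  if h : (k : ℕ) + n / 2 + 1 < n then Sum.inr ⟨(k : ℕ) + n / 2 + 1, h⟩ else Sum.inl k

def cov5 (n : ℕ) : Fin n → Fin n ⊕ Fin n := fun k =>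
  if (k : ℕ) = 0 then Sum.inr ⟨n / 2, by have := k.isLt; omega⟩ else Sum.inl k

lemma sigmaBc_le_16_sigmaCl (n : ℕ) (hn : 3 ≤ n) : sigmaBc n ≤ 16 * sigmaCl n := by
  classical
  apply Nat.sInf_le
  intro lab
  obtain ⟨S1, hS1, hc1⟩ := cl_oracle n (fun e => bigLab lab (Sym2.map (cov1 n) e))
  obtain ⟨S2, hS2, hc2⟩ := cl_oracle n (fun e => bigLab lab (Sym2.map (cov2 n) e))
  obtain ⟨S3, hS3, hc3⟩ := cl_oracle n (fun e => bigLab lab (Sym2.map (cov3 n) e))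
  obtain ⟨S4, hS4, hc4⟩ := cl_oracle n (fun e => bigLab lab (Sym2.map (cov4 n) e))
  obtain ⟨S5, hS5, hc5⟩ := cl_oracle n (fun e => bigLab lab (Sym2.map (cov5 n) e))
  set T : Finset (Sym2 (Fin n ⊕ Fin n)) :=
    S1.image (Sym2.map (cov1 n)) ∪ S2.image (Sym2.map (cov2 n)) ∪
    S3.image (Sym2.map (cov3 n)) ∪ S4.image (Sym2.map (cov4 n)) ∪
    S5.image (Sym2.map (cov5 n)) with hT
  have hlift : ∀ (ψ : Fin n → Fin n ⊕ Fin n) (S : Finset (Sym2 (Fin n))),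
      IsSpanner (fun e => bigLab lab (Sym2.map ψ e)) (cliqueEdges (Fin n)) (↑S) →
      S.image (Sym2.map ψ) ⊆ T →
      ∀ (u' v' : Fin n) (uu vv : Fin n ⊕ Fin n), ψ u' = uu → ψ v' = vv →
      Reaches (bigLab lab) (↑T) uu vv := by
    intro ψ S hsp hsubT u' v' uu vv hu hv
    subst hu; subst hv
    exact reaches_mono (Finset.coe_subset.2 hsubT) (reach_map ψ (bigLab lab) S (hsp.2 u' v'))
  have hsub1 : S1.image (Sym2.map (cov1 n)) ⊆ T := by
    intro e he
    exact Finset.mem_union_left _ (Finset.mem_union_left _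
      (Finset.mem_union_left _ (Finset.mem_union_left _ he)))
  have hsub2 : S2.image (Sym2.map (cov2 n)) ⊆ T := by
    intro e he
    exact Finset.mem_union_left _ (Finset.mem_union_left _
      (Finset.mem_union_left _ (Finset.mem_union_right _ he)))
  have hsub3 : S3.image (Sym2.map (cov3 n)) ⊆ T := by
    intro e he
    exact Finset.mem_union_left _ (Finset.mem_union_left _ (Finset.mem_union_right _ he))
  have hsub4 : S4.image (Sym2.map (cov4 n)) ⊆ T := by
    intro e he
    exact Finset.mem_union_left _ (Finset.mem_union_right _ he)
  have hsub5 : S5.image (Sym2.map (cov5 n)) ⊆ T := by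
    intro e he
    exact Finset.mem_union_right _ he
  have hreach : ∀ (a b : Fin n), Reaches (bigLab lab) (↑T) (Sum.inl a) (Sum.inr b) := by
    intro a b
    have ha' := a.isLt
    have hb' := b.isLt
    by_cases ha : (a : ℕ) < n / 2
    · by_cases hb : (b : ℕ) < n / 2
      · refine hlift (cov1 n) S1 hS1 hsub1 a ⟨(b : ℕ) + n / 2, by omega⟩ _ _ ?_ ?_
        · rw [cov1, dif_pos ha]
        · rw [cov1, dif_neg (by simp)]
          congr 1
          apply Fin.ext
          simp
      · refine hlift (cov2 n) S2 hS2 hsub2 a b _ _ ?_ ?_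
        · rw [cov2, if_pos ha]
        · rw [cov2, if_neg hb]
    · by_cases hb : (b : ℕ) < n / 2
      · refine hlift (cov3 n) S3 hS3 hsub3 a b _ _ ?_ ?_
        · rw [cov3, if_neg ha]
        · rw [cov3, if_pos hb]
      · by_cases hb2 : (b : ℕ) = n / 2
        · refine hlift (cov5 n) S5 hS5 hsub5 a ⟨0, by omega⟩ _ _ ?_ ?_
          · rw [cov5, if_neg (by omega)]
          · rw [cov5, if_pos (by simp)]
            congr 1
            apply Fin.ext
            simp [hb2]
        · refine hlift (cov4 n) S4 hS4 hsub4 a ⟨(b : ℕ) - n / 2 - 1, by omega⟩ _ _ ?_ ?_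
          · rw [cov4, dif_neg (by omega)]
          · rw [cov4, dif_pos (by simp; omega)]
            congr 1
            apply Fin.ext
            simp
            omega
  refine ⟨T.filter (fun e => e ∈ bicliqueEdges (Fin n) (Fin n)), ⟨?_, ?_⟩, ?_⟩
  · intro e he
    rw [Finset.mem_coe, Finset.mem_filter] at he
    exact he.2
  · intro a b
    obtain ⟨p, hh, hl, hne, hmem, hch⟩ := hreach a b
    have hpw := (chain'_le_iff_pairwise (bigLab lab) _).1 hch
    have hcross := pure_cross lab p hpw ⟨b, hl⟩ (Or.inl ⟨a, hh⟩)
    refine ⟨p, hh, hl, hne, ?_, ?_⟩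
    · intro e he
      rw [Finset.mem_coe, Finset.mem_filter]
      exact ⟨Finset.mem_coe.1 (hmem e he), hcross e he⟩
    · refine (chain'_le_iff_pairwise lab _).2 (hpw.imp_of_mem ?_)
      intro e f hef hff h
      obtain ⟨x, y, rfl⟩ := hcross e hef
      obtain ⟨x', y', rfl⟩ := hcross f hff
      rw [bigLab_AB, bigLab_AB] at h
      omega
  · have e1 : (S1.image (Sym2.map (cov1 n))).card ≤ sigmaCl n :=
      Finset.card_image_le.trans hc1
    have e2 : (S2.image (Sym2.map (cov2 n))).card ≤ sigmaCl n :=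
      Finset.card_image_le.trans hc2
    have e3 : (S3.image (Sym2.map (cov3 n))).card ≤ sigmaCl n :=
      Finset.card_image_le.trans hc3
    have e4 : (S4.image (Sym2.map (cov4 n))).card ≤ sigmaCl n :=
      Finset.card_image_le.trans hc4
    have e5 : (S5.image (Sym2.map (cov5 n))).card ≤ sigmaCl n :=
      Finset.card_image_le.trans hc5
    have hTcard : T.card ≤ 5 * sigmaCl n := by
      rw [hT]
      refine (Finset.card_union_le _ _).trans ?_
      have h4 := Finset.card_union_le (S1.image (Sym2.map (cov1 n)) ∪ S2.image (Sym2.map (cov2 n)) ∪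
        S3.image (Sym2.map (cov3 n))) (S4.image (Sym2.map (cov4 n)))
      have h3 := Finset.card_union_le (S1.image (Sym2.map (cov1 n)) ∪ S2.image (Sym2.map (cov2 n)))
        (S3.image (Sym2.map (cov3 n)))
      have h2 := Finset.card_union_le (S1.image (Sym2.map (cov1 n))) (S2.image (Sym2.map (cov2 n)))
      omega
    have := Finset.card_filter_le T (fun e => e ∈ bicliqueEdges (Fin n) (Fin n))
    omega

/-- For every `n ≥ 3`, `σ_cl(n) ≤ σ_bc(n)` and
`σ_bc(n) ≤ 16·σ_cl(n)`; consequently `σ_cl(n) ∈ Θ(σ_bc(n))`. -/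
theorem stmt0 (n : ℕ) (hn : 3 ≤ n) :
    sigmaCl n ≤ sigmaBc n ∧ sigmaBc n ≤ 16 * sigmaCl n := by
  exact ⟨sigmaCl_le_sigmaBc n, sigmaBc_le_16_sigmaCl n hn⟩

end TS
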